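/- Define λ(σ) = A² + (A⁴/σ²)·exp(A²/σ²)·Ei(−A²/σ²) − σ²·μ(A/σ)², where μ(y) = (y/2)[2y − √π·erfc(y)·e^{y²}(2y²−1)] and Ei(x) = ∫_{−∞}^x t^{−1}e^t dt for x < 0. Then as σ/A → 0⁺, λ(σ) = σ⁶/(2A⁴) + O((σ/A)⁸·A²). -/

import Mathlib

open Real MeasureTheory Set Filter Topology

set_option maxHeartbeats 1000000


/-- Complementary error function. -/
noncomputable def erfc (x : ℝ) : ℝ := (2 / Real.sqrt Real.pi) * ∫ t in Set.Ioi x, Real.exp (-t ^ 2)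

/-- Bussgang gain of the SSPA: `μ(y) = (y/2)[2y − √π·erfc(y)·e^{y²}(2y²−1)]`. -/
noncomputable def muSSPA (y : ℝ) : ℝ :=
  (y / 2) * (2 * y - Real.sqrt Real.pi * erfc y * Real.exp (y ^ 2) * (2 * y ^ 2 - 1))

/-- Exponential integral `Ei(x) = ∫_{−∞}^x e^t/t dt` (for `x < 0`). -/
noncomputable def Ei (x : ℝ) : ℝ := ∫ t in Set.Iio x, Real.exp t / t

/-- Distortion variance of the soft limiter with saturation `A`:
`λ(σ) = A² + (A⁴/σ²)·e^{A²/σ²}·Ei(−A²/σ²) − σ²·μ(A/σ)²`. -/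
noncomputable def lamDist (A σ : ℝ) : ℝ :=
  A ^ 2 + (A ^ 4 / σ ^ 2) * Real.exp (A ^ 2 / σ ^ 2) * Ei (-(A ^ 2 / σ ^ 2))
    - σ ^ 2 * (muSSPA (A / σ)) ^ 2


lemma intOn_exp_neg_div_pow {z : ℝ} (hz : 0 < z) (n : ℕ) :
    IntegrableOn (fun t => Real.exp (-t) / t ^ n) (Set.Ioi z) := by
  apply Integrable.mono' (g := fun t => Real.exp (-t) * (z ^ n)⁻¹)
  · have := exp_neg_integrableOn_Ioi z one_pos
    simp only [neg_mul, one_mul] at this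
    exact this.mul_const _
  · apply Measurable.aestronglyMeasurable
    exact (Real.measurable_exp.comp measurable_neg).div ((measurable_id.pow_const n))
  · filter_upwards [ae_restrict_mem measurableSet_Ioi] with t ht
    have h0 : 0 < t := lt_trans hz ht
    rw [Real.norm_eq_abs, abs_of_nonneg (by positivity), div_eq_mul_inv]
    gcongr
    exact le_of_lt ht

lemma integral_exp_neg_div_one (z : ℝ) (hz : 0 < z) :
    ∫ t in Ioi z, Real.exp (-t) / t =
      Real.exp (-z) * ((z^3 - z^2 + 2*z - 6) / z^4) + 24 * ∫ t in Ioi z, Real.exp (-t) / t ^ 5 := by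
  have i1 : IntegrableOn (fun t => Real.exp (-t) / t) (Ioi z) := by
    simpa using intOn_exp_neg_div_pow hz 1
  have i5 : IntegrableOn (fun t => Real.exp (-t) / t ^ 5) (Ioi z) := intOn_exp_neg_div_pow hz 5
  have key : ∫ t in Ioi z, (-(Real.exp (-t) / t) + 24 * (Real.exp (-t) / t ^ 5)) =
      0 - Real.exp (-z) * ((z^3 - z^2 + 2*z - 6) / z^4) := by
    apply integral_Ioi_of_hasDerivAt_of_tendsto'
        (f := fun t => Real.exp (-t) * ((t^3 - t^2 + 2*t - 6) / t^4))
    · intro x hx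
      have hx0 : 0 < x := lt_of_lt_of_le hz hx
      have hE : HasDerivAt (fun t : ℝ => Real.exp (-t)) (-Real.exp (-x)) x := by
        exact ((Real.hasDerivAt_exp (-x)).comp x ((hasDerivAt_id x).neg)).congr_deriv (by simp)
      have hP : HasDerivAt (fun t : ℝ => t^3 - t^2 + 2*t - 6) (3*x^2 - 2*x + 2) x := by
        have := (((hasDerivAt_pow 3 x).sub (hasDerivAt_pow 2 x)).add
          ((hasDerivAt_id x).const_mul 2)).sub_const 6
        exact this.congr_deriv (by push_cast; ring)
      have hQ : HasDerivAt (fun t : ℝ => (t^3 - t^2 + 2*t - 6) / t^4)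
          (((3*x^2 - 2*x + 2) * x^4 - (x^3 - x^2 + 2*x - 6) * (4*x^3)) / (x^4)^2) x := by
        exact hP.div (by simpa using hasDerivAt_pow 4 x) (by positivity)
      have := hE.mul hQ
      refine this.congr_deriv ?_
      field_simp
      ring
    · exact i1.neg.add (i5.const_mul 24)
    · apply squeeze_zero_norm' (a := fun t : ℝ => 4 * Real.exp (-t))
      · filter_upwards [eventually_ge_atTop 6] with t ht
        have h0 : (0:ℝ) < t := by linarith
        have hnum : 0 ≤ t^3 - t^2 + 2*t - 6 := by nlinarith
        rw [Real.norm_eq_abs, abs_of_nonneg (by positivity)]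
        rw [mul_comm (4:ℝ)]
        have : (t^3 - t^2 + 2*t - 6) / t^4 ≤ 4 := by
          rw [div_le_iff₀ (by positivity)]
          nlinarith
        calc Real.exp (-t) * ((t^3 - t^2 + 2*t - 6) / t^4) ≤ Real.exp (-t) * 4 := by
              gcongr
        _ = Real.exp (-t) * 4 := rfl
      · simpa using (Real.tendsto_exp_neg_atTop_nhds_zero.const_mul 4)
  have split := integral_add i1.neg (i5.const_mul (24:ℝ))
  simp only [Pi.neg_apply, integral_neg, integral_const_mul] at split
  rw [split] at key
  linarith

lemma gauss_integrable : Integrable (fun t : ℝ => Real.exp (-t^2)) := by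
  have := integrable_exp_neg_mul_sq (b := 1) one_pos
  simpa using this

lemma intOn_gauss_div_pow {y : ℝ} (hy : 0 < y) (n : ℕ) :
    IntegrableOn (fun t => Real.exp (-t^2) / t ^ n) (Set.Ioi y) := by
  apply Integrable.mono' (g := fun t => Real.exp (-t^2) * (y ^ n)⁻¹)
  · exact gauss_integrable.integrableOn.mul_const _
  · apply Measurable.aestronglyMeasurable
    exact (Real.measurable_exp.comp (measurable_id.pow_const 2).neg).div (measurable_id.pow_const n)
  · filter_upwards [ae_restrict_mem measurableSet_Ioi] with t ht
    have h0 : 0 < t := lt_trans hy ht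
    rw [Real.norm_eq_abs, abs_of_nonneg (by positivity), div_eq_mul_inv]
    gcongr
    exact le_of_lt ht

lemma integral_id_mul_gauss (y : ℝ) (hy : 0 < y) :
    ∫ t in Ioi y, t * Real.exp (-t^2) = Real.exp (-y^2) / 2 := by
  have key : ∫ t in Ioi y, t * Real.exp (-t^2) = 0 - (-(Real.exp (-y^2)) / 2) := by
    apply integral_Ioi_of_hasDerivAt_of_tendsto' (f := fun t => -(Real.exp (-t^2)) / 2)
    · intro x hx
      have hE : HasDerivAt (fun t : ℝ => Real.exp (-t^2)) (-2*x*Real.exp (-x^2)) x := by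
        have := (Real.hasDerivAt_exp (-x^2)).comp x ((hasDerivAt_pow 2 x).neg)
        refine this.congr_deriv ?_
        simp; ring
      have := (hE.neg).div_const 2
      refine this.congr_deriv ?_
      ring
    · have := integrable_mul_exp_neg_mul_sq (b := 1) one_pos
      simp only [neg_mul, one_mul] at this
      exact this.integrableOn
    · have : Tendsto (fun t : ℝ => Real.exp (-t^2)) atTop (𝓝 0) := by
        apply squeeze_zero_norm' (a := fun t : ℝ => Real.exp (-t))
        · filter_upwards [eventually_ge_atTop 1] with t ht
          rw [Real.norm_eq_abs, abs_of_nonneg (Real.exp_nonneg _)]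
          exact Real.exp_le_exp.2 (by nlinarith)
        · exact Real.tendsto_exp_neg_atTop_nhds_zero
      simpa using (this.neg.div_const 2)
  rw [key]; ring

lemma tendsto_gauss : Tendsto (fun t : ℝ => Real.exp (-t^2)) atTop (𝓝 0) := by
  apply squeeze_zero_norm' (a := fun t : ℝ => Real.exp (-t))
  · filter_upwards [eventually_ge_atTop 1] with t ht
    rw [Real.norm_eq_abs, abs_of_nonneg (Real.exp_nonneg _)]
    exact Real.exp_le_exp.2 (by nlinarith)
  · exact Real.tendsto_exp_neg_atTop_nhds_zero

lemma integral_gauss_eq (y : ℝ) (hy : 0 < y) :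
    ∫ t in Ioi y, Real.exp (-t^2) =
      Real.exp (-y^2) * ((8*y^6 - 4*y^4 + 6*y^2 - 15) / (16*y^7))
        + (105/16) * ∫ t in Ioi y, Real.exp (-t^2) / t ^ 8 := by
  have i0 : IntegrableOn (fun t : ℝ => Real.exp (-t^2)) (Ioi y) := gauss_integrable.integrableOn
  have i8 : IntegrableOn (fun t => Real.exp (-t^2) / t ^ 8) (Ioi y) := intOn_gauss_div_pow hy 8
  have key : ∫ t in Ioi y, (-(Real.exp (-t^2)) + (105/16) * (Real.exp (-t^2) / t ^ 8)) =
      0 - Real.exp (-y^2) * ((8*y^6 - 4*y^4 + 6*y^2 - 15) / (16*y^7)) := by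
    apply integral_Ioi_of_hasDerivAt_of_tendsto'
        (f := fun t => Real.exp (-t^2) * ((8*t^6 - 4*t^4 + 6*t^2 - 15) / (16*t^7)))
    · intro x hx
      have hx0 : 0 < x := lt_of_lt_of_le hy hx
      have hE : HasDerivAt (fun t : ℝ => Real.exp (-t^2)) (-2*x*Real.exp (-x^2)) x := by
        have := (Real.hasDerivAt_exp (-x^2)).comp x ((hasDerivAt_pow 2 x).neg)
        refine this.congr_deriv ?_
        simp; ring
      have hP : HasDerivAt (fun t : ℝ => 8*t^6 - 4*t^4 + 6*t^2 - 15) (48*x^5 - 16*x^3 + 12*x) x := by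
        have := ((((hasDerivAt_pow 6 x).const_mul 8).sub ((hasDerivAt_pow 4 x).const_mul 4)).add
          ((hasDerivAt_pow 2 x).const_mul 6)).sub_const 15
        exact this.congr_deriv (by push_cast; ring)
      have hD : HasDerivAt (fun t : ℝ => 16*t^7) (16*(7*x^6)) x := by
        simpa using (hasDerivAt_pow 7 x).const_mul 16
      have hQ : HasDerivAt (fun t : ℝ => (8*t^6 - 4*t^4 + 6*t^2 - 15) / (16*t^7))
          (((48*x^5 - 16*x^3 + 12*x) * (16*x^7) - (8*x^6 - 4*x^4 + 6*x^2 - 15) * (16*(7*x^6)))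
            / (16*x^7)^2) x := hP.div hD (by positivity)
      have := hE.mul hQ
      refine this.congr_deriv ?_
      field_simp
      ring
    · exact i0.neg.add (i8.const_mul _)
    · apply squeeze_zero_norm' (a := fun t : ℝ => 3 * Real.exp (-t))
      · filter_upwards [eventually_ge_atTop 2] with t ht
        have h0 : (0:ℝ) < t := by linarith
        have ht2 : (4:ℝ) ≤ t^2 := by nlinarith
        have ht4 : (16:ℝ) ≤ t^4 := by nlinarith
        have ht64 : 4*t^4 ≤ t^6 := by nlinarith
        have ht62 : t^2 ≤ t^6 := by nlinarith
        have ht76 : 2*t^6 ≤ t^7 := by nlinarith [pow_nonneg h0.le 6]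
        have hnum : 0 ≤ 8*t^6 - 4*t^4 + 6*t^2 - 15 := by nlinarith
        rw [Real.norm_eq_abs, abs_of_nonneg (by positivity)]
        have h1 : (8*t^6 - 4*t^4 + 6*t^2 - 15) / (16*t^7) ≤ 1 := by
          rw [div_le_iff₀ (by positivity)]
          nlinarith [ht62, ht76, ht4]
        have h2 : Real.exp (-t^2) ≤ Real.exp (-t) := Real.exp_le_exp.2 (by nlinarith)
        calc Real.exp (-t^2) * ((8*t^6 - 4*t^4 + 6*t^2 - 15) / (16*t^7))
            ≤ Real.exp (-t) * 1 := by
              apply mul_le_mul h2 h1 (by positivity) (Real.exp_nonneg _)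
        _ ≤ 3 * Real.exp (-t) := by nlinarith [Real.exp_nonneg (-t)]
      · simpa using (Real.tendsto_exp_neg_atTop_nhds_zero.const_mul 3)
  have split := integral_add i0.neg (i8.const_mul ((105:ℝ)/16))
  simp only [Pi.neg_apply, integral_neg, integral_const_mul] at split
  rw [split] at key
  linarith

lemma J1_bounds {z : ℝ} (hz : 0 < z) :
    (0 ≤ ∫ t in Ioi z, Real.exp (-t) / t ^ 5) ∧
      (∫ t in Ioi z, Real.exp (-t) / t ^ 5) ≤ Real.exp (-z) / z ^ 5 := by
  constructor
  · apply setIntegral_nonneg measurableSet_Ioi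
    intro t ht
    have : 0 < t := lt_trans hz ht
    positivity
  · have hle : (∫ t in Ioi z, Real.exp (-t) / t ^ 5) ≤ ∫ t in Ioi z, Real.exp (-t) * (z ^ 5)⁻¹ := by
      apply setIntegral_mono_on (intOn_exp_neg_div_pow hz 5)
      · have := exp_neg_integrableOn_Ioi z one_pos
        simp only [neg_mul, one_mul] at this
        exact this.mul_const _
      · exact measurableSet_Ioi
      · intro t ht
        have h0 : 0 < t := lt_trans hz ht
        rw [div_eq_mul_inv]
        gcongr
        exact le_of_lt ht
    calc (∫ t in Ioi z, Real.exp (-t) / t ^ 5) ≤ ∫ t in Ioi z, Real.exp (-t) * (z ^ 5)⁻¹ := hle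
    _ = Real.exp (-z) / z ^ 5 := by
        rw [integral_mul_const]
        have : ∫ t in Ioi z, Real.exp (-t) = Real.exp (-z) := integral_exp_neg_Ioi z
        rw [this, div_eq_mul_inv]

lemma J2_bounds {y : ℝ} (hy : 1 ≤ y) :
    (0 ≤ ∫ t in Ioi y, Real.exp (-t^2) / t ^ 8) ∧
      (∫ t in Ioi y, Real.exp (-t^2) / t ^ 8) ≤ Real.exp (-y^2) / (2 * y ^ 9) := by
  have hy0 : 0 < y := lt_of_lt_of_le one_pos hy
  constructor
  · apply setIntegral_nonneg measurableSet_Ioi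
    intro t ht
    have : 0 < t := lt_trans hy0 ht
    positivity
  · have hle : (∫ t in Ioi y, Real.exp (-t^2) / t ^ 8)
        ≤ ∫ t in Ioi y, (t * Real.exp (-t^2)) * (y ^ 9)⁻¹ := by
      apply setIntegral_mono_on (intOn_gauss_div_pow hy0 8)
      · have := integrable_mul_exp_neg_mul_sq (b := 1) one_pos
        simp only [neg_mul, one_mul] at this
        exact this.integrableOn.mul_const _
      · exact measurableSet_Ioi
      · intro t ht
        have h0 : 0 < t := lt_trans hy0 ht
        have hyt : y ≤ t := le_of_lt ht
        have key : Real.exp (-t^2) / t ^ 8 = (t * Real.exp (-t^2)) / t ^ 9 := by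
          field_simp
        rw [key, div_eq_mul_inv]
        gcongr
    calc (∫ t in Ioi y, Real.exp (-t^2) / t ^ 8)
        ≤ ∫ t in Ioi y, (t * Real.exp (-t^2)) * (y ^ 9)⁻¹ := hle
    _ = Real.exp (-y^2) / (2 * y ^ 9) := by
        rw [integral_mul_const, integral_id_mul_gauss y hy0]
        field_simp

lemma Ei_neg_eq {z : ℝ} (hz : 0 < z) :
    Ei (-z) = -∫ t in Ioi z, Real.exp (-t) / t := by
  have h1 : Ei (-z) = ∫ t in Iic (-z), Real.exp t / t := by
    rw [Ei, ← integral_Iic_eq_integral_Iio]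
  have h2 : (∫ t in Iic (-z), Real.exp t / t)
      = ∫ t in Iic (-z), (fun u => Real.exp (-u) / (-u)) (-t) := by
    apply setIntegral_congr_fun measurableSet_Iic
    intro t _
    simp
  have h3 := integral_comp_neg_Iic (-z) (fun u => Real.exp (-u) / (-u))
  rw [h1, h2, h3, neg_neg]
  rw [← integral_Ici_eq_integral_Ioi, ← integral_Ici_eq_integral_Ioi]
  rw [← integral_neg]
  apply setIntegral_congr_fun measurableSet_Ici
  intro t _
  simp [div_neg]

lemma Ei_approx {z : ℝ} (hz : 1 ≤ z) :
    |Real.exp z * Ei (-z) + (z^3 - z^2 + 2*z - 6)/z^4| ≤ 24 / z^5 := by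
  have hz0 : 0 < z := lt_of_lt_of_le one_pos hz
  obtain ⟨hJ0, hJ1⟩ := J1_bounds hz0
  set J := ∫ t in Ioi z, Real.exp (-t) / t ^ 5 with hJ
  have hEE : Real.exp z * Real.exp (-z) = 1 := by rw [← Real.exp_add]; simp
  have h1 : Real.exp z * Ei (-z) + (z^3 - z^2 + 2*z - 6)/z^4 = -(24 * Real.exp z * J) := by
    rw [Ei_neg_eq hz0, integral_exp_neg_div_one z hz0, ← hJ]
    linear_combination (-((z^3 - z^2 + 2*z - 6)/z^4)) * hEE
  rw [h1, abs_neg, abs_of_nonneg (mul_nonneg (by positivity) hJ0)]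
  calc 24 * Real.exp z * J ≤ 24 * Real.exp z * (Real.exp (-z) / z^5) := by gcongr
  _ = 24 / z^5 := by linear_combination (24/z^5) * hEE

lemma erfc_approx {y : ℝ} (hy : 1 ≤ y) :
    |Real.sqrt Real.pi * erfc y * Real.exp (y^2)
      - 2 * ((8*y^6 - 4*y^4 + 6*y^2 - 15) / (16*y^7))| ≤ (105/16) / y^9 := by
  have hy0 : 0 < y := lt_of_lt_of_le one_pos hy
  obtain ⟨hJ0, hJ1⟩ := J2_bounds hy
  set J := ∫ t in Ioi y, Real.exp (-t^2) / t ^ 8 with hJ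
  have hπ : Real.sqrt Real.pi ≠ 0 := by positivity
  have hEE : Real.exp (y^2) * Real.exp (-y^2) = 1 := by rw [← Real.exp_add]; simp
  have hErfc : Real.sqrt Real.pi * erfc y = 2 * ∫ t in Ioi y, Real.exp (-t^2) := by
    rw [erfc]; field_simp
  have h1 : Real.sqrt Real.pi * erfc y * Real.exp (y^2)
      - 2 * ((8*y^6 - 4*y^4 + 6*y^2 - 15) / (16*y^7))
      = 2 * (105/16) * Real.exp (y^2) * J := by
    rw [hErfc, integral_gauss_eq y hy0, ← hJ]
    linear_combination (2 * ((8*y^6 - 4*y^4 + 6*y^2 - 15) / (16*y^7))) * hEE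
  rw [h1, abs_of_nonneg (mul_nonneg (mul_nonneg (by norm_num) (Real.exp_nonneg _)) hJ0)]
  calc 2 * (105/16) * Real.exp (y^2) * J
      ≤ 2 * (105/16) * Real.exp (y^2) * (Real.exp (-y^2) / (2*y^9)) := by gcongr
  _ = (105/16) / y^9 := by linear_combination ((105/16)/y^9) * hEE

lemma abs_poly_bound {u R s : ℝ} (hu0 : 0 < u) (hu1 : u ≤ 1)
    (hR : |R| ≤ 24*u^3) (hs : |s| ≤ (105/16)*u^3) :
    |R + ((51/8)*u^3 - (111/16)*u^4 + (135/32)*u^5 - (225/256)*u^6)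
      + 2*((1 - u + (9/4)*u^2 - (15/16)*u^3)*s) - s^2| ≤ 200*u^3 := by
  have hu43 : u^4 ≤ u^3 := pow_le_pow_of_le_one hu0.le hu1 (by norm_num)
  have hu53 : u^5 ≤ u^3 := pow_le_pow_of_le_one hu0.le hu1 (by norm_num)
  have hu63 : u^6 ≤ u^3 := pow_le_pow_of_le_one hu0.le hu1 (by norm_num)
  have hu3pos : 0 < u^3 := by positivity
  set a : ℝ := 1 - u + (9/4)*u^2 - (15/16)*u^3 with hadef
  set P : ℝ := (51/8)*u^3 - (111/16)*u^4 + (135/32)*u^5 - (225/256)*u^6 with hPdef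
  have hP : |P| ≤ 18*u^3 := by
    rw [hPdef, abs_le]
    constructor <;> nlinarith [hu43, hu53, hu63, hu3pos]
  have hAa : |a| ≤ 6 := by
    rw [hadef, abs_le]
    constructor <;> nlinarith [hu0.le, hu1, sq_nonneg u, pow_nonneg hu0.le 3]
  have hss : s^2 ≤ ((105/16)*u^3)^2 := sq_le_sq' (abs_le.1 hs).1 (abs_le.1 hs).2
  have hs2 : s^2 ≤ 44*u^3 := by nlinarith [hss, hu63, hu3pos]
  have has : |a*s| ≤ 6*((105/16)*u^3) := by
    rw [abs_mul]
    exact mul_le_mul hAa hs (abs_nonneg _) (by norm_num)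
  have tri : |R + P + 2*(a*s) - s^2| ≤ |R| + |P| + 2*|a*s| + s^2 := by
    have h1 : |R + P + 2*(a*s) - s^2| ≤ |R + P + 2*(a*s)| + |s^2| := abs_sub _ _
    have h2' : |R + P + 2*(a*s)| ≤ |R + P| + |2*(a*s)| := abs_add_le _ _
    have h3 : |R + P| ≤ |R| + |P| := abs_add_le _ _
    have h4 : |2*(a*s)| = 2*|a*s| := by rw [abs_mul, abs_of_nonneg (by norm_num : (0:ℝ) ≤ 2)]
    have h5 : |s^2| = s^2 := abs_of_nonneg (sq_nonneg s)
    linarith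
  calc |R + P + 2*(a*s) - s^2| ≤ |R| + |P| + 2*|a*s| + s^2 := tri
  _ ≤ 24*u^3 + 18*u^3 + 2*(6*((105/16)*u^3)) + 44*u^3 := by gcongr
  _ ≤ 200*u^3 := by nlinarith [hu3pos]

set_option maxHeartbeats 1000000 in
lemma key_bound {y : ℝ} (hy : 1 ≤ y) :
    |y^2 + y^4 * Real.exp (y^2) * Ei (-(y^2)) - (muSSPA y)^2 - 1/(2*y^4)| ≤ 200 / y^6 := by
  have hy0 : 0 < y := lt_of_lt_of_le one_pos hy
  have hy2 : (1:ℝ) ≤ y^2 := by nlinarith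
  have hyne : (y:ℝ) ≠ 0 := ne_of_gt hy0
  set u : ℝ := 1/y^2 with hu_def
  have hu0 : 0 < u := by positivity
  have hu1 : u ≤ 1 := by rw [hu_def, div_le_one (by positivity)]; exact hy2
  -- Ei part
  have ha := Ei_approx hy2
  set R : ℝ := y^4 * (Real.exp (y^2) * Ei (-(y^2))
      + ((y^2)^3 - (y^2)^2 + 2*(y^2) - 6)/(y^2)^4) with hRdef
  have hR : |R| ≤ 24 * u^3 := by
    rw [hRdef, abs_mul, abs_of_nonneg (show (0:ℝ) ≤ y^4 by positivity)]
    calc y^4 * |Real.exp (y^2) * Ei (-(y^2)) + ((y^2)^3 - (y^2)^2 + 2*(y^2) - 6)/(y^2)^4|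
        ≤ y^4 * (24/(y^2)^5) := by gcongr
    _ = 24 * u^3 := by rw [hu_def]; field_simp
  have hT : y^4 * Real.exp (y^2) * Ei (-(y^2)) = -y^2 + 1 - 2*u + 6*u^2 + R := by
    rw [hRdef, hu_def]; field_simp; ring
  -- erfc part
  have hb := erfc_approx hy
  set r2 : ℝ := Real.sqrt Real.pi * erfc y * Real.exp (y^2)
      - 2 * ((8*y^6 - 4*y^4 + 6*y^2 - 15) / (16*y^7)) with hr2def
  set s : ℝ := (y/2) * (2*y^2 - 1) * r2 with hsdef
  have hs : |s| ≤ (105/16) * u^3 := by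
    rw [hsdef, abs_mul, abs_of_nonneg (show (0:ℝ) ≤ (y/2)*(2*y^2-1) by nlinarith)]
    calc (y/2)*(2*y^2-1) * |r2| ≤ y^3 * ((105/16)/y^9) := by
          apply mul_le_mul (by nlinarith) hb (abs_nonneg _) (by positivity)
    _ = (105/16) * u^3 := by rw [hu_def]; field_simp
  have hE : Real.sqrt Real.pi * erfc y * Real.exp (y^2)
      = r2 + 2*((8*y^6-4*y^4+6*y^2-15)/(16*y^7)) := by rw [hr2def]; ring
  have hmu : muSSPA y = 1 - u + (9/4)*u^2 - (15/16)*u^3 - s := by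
    simp only [muSSPA]
    rw [hE, hsdef, hu_def]
    field_simp
    ring
  have h2 : 1/(2*y^4) = u^2/2 := by rw [hu_def]; field_simp
  have h6 : (200:ℝ)/y^6 = 200*u^3 := by rw [hu_def]; field_simp
  rw [hT, hmu, h2, h6]
  have hGeq : y^2 + (-y^2 + 1 - 2*u + 6*u^2 + R) - (1 - u + (9/4)*u^2 - (15/16)*u^3 - s)^2 - u^2/2
      = R + ((51/8)*u^3 - (111/16)*u^4 + (135/32)*u^5 - (225/256)*u^6)
        + 2*((1 - u + (9/4)*u^2 - (15/16)*u^3)*s) - s^2 := by ring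
  rw [hGeq]
  exact abs_poly_bound hu0 hu1 hR hs

/-- Small-signal asymptotic of the distortion variance: as `σ/A → 0⁺`,
`λ(σ) = σ⁶/(2A⁴) + O((σ/A)⁸·A²)`. -/
theorem stmt12 (A : ℝ) (hA : 0 < A) :
    (fun σ : ℝ => lamDist A σ - σ ^ 6 / (2 * A ^ 4)) =O[nhdsWithin 0 (Set.Ioi 0)]
      (fun σ : ℝ => (σ / A) ^ 8 * A ^ 2) := by
  rw [Asymptotics.isBigO_iff]
  refine ⟨200, ?_⟩
  filter_upwards [Ioo_mem_nhdsGT_of_mem (show (0:ℝ) ∈ Ico 0 A from ⟨le_refl 0, hA⟩)] with σ hσ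
  obtain ⟨h0σ, hσA⟩ := hσ
  set y : ℝ := A / σ with hydef
  have hy1 : 1 ≤ y := (one_le_div h0σ).2 hσA.le
  have hy0 : 0 < y := lt_of_lt_of_le one_pos hy1
  have hσne : σ ≠ 0 := ne_of_gt h0σ
  have hAne : A ≠ 0 := ne_of_gt hA
  have hA2 : A ^ 2 / σ ^ 2 = y ^ 2 := by rw [hydef, div_pow]
  have heq : lamDist A σ - σ ^ 6 / (2 * A ^ 4)
      = σ ^ 2 * (y^2 + y^4 * Real.exp (y^2) * Ei (-(y^2)) - (muSSPA y)^2 - 1/(2*y^4)) := by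
    rw [lamDist, hA2, hydef]
    field_simp
  rw [heq, Real.norm_eq_abs, Real.norm_eq_abs, abs_mul, abs_of_nonneg (sq_nonneg σ)]
  have hb := key_bound hy1
  have hRHS : |(σ / A) ^ 8 * A ^ 2| = σ ^ 2 * (1 / y ^ 6) * 1 := by
    rw [abs_of_nonneg (by positivity)]
    rw [hydef]
    field_simp
  calc σ ^ 2 * |y^2 + y^4 * Real.exp (y^2) * Ei (-(y^2)) - (muSSPA y)^2 - 1/(2*y^4)|
      ≤ σ ^ 2 * (200 / y^6) := by gcongr
  _ = 200 * |(σ / A) ^ 8 * A ^ 2| := by rw [hRHS]; ring
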